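/- If H is a subgraph of a graph G, then AT(H) ≤ AT(G). -/

import Mathlib

open MvPolynomial Finset

/-- The graph polynomial `P_G = ∏_{(i,j) ∈ E, i < j} (xᵢ - xⱼ)`. -/
noncomputable def graphPoly {V : Type} [Fintype V] [LinearOrder V] (G : SimpleGraph V)
    [DecidableRel G.Adj] : MvPolynomial V ℝ :=
  ∏ p ∈ Finset.univ.filter (fun p : V × V => p.1 < p.2 ∧ G.Adj p.1 p.2), (X p.1 - X p.2)

/-- `G` is Alon–Tarsi `k`-choosable: `P_G` has a monomial with non-zero coefficient all of whose
exponents are at most `k - 1`. -/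
def IsAT {V : Type} [Fintype V] [LinearOrder V] (G : SimpleGraph V) [DecidableRel G.Adj]
    (k : ℕ) : Prop :=
  ∃ t : V →₀ ℕ, (graphPoly G).coeff t ≠ 0 ∧ ∀ i, t i + 1 ≤ k

/-- The Alon–Tarsi number of `G`: the least `k` such that `G` is Alon–Tarsi `k`-choosable. -/
noncomputable def ATnum {V : Type} [Fintype V] [LinearOrder V] (G : SimpleGraph V)
    [DecidableRel G.Adj] : ℕ :=
  sInf {k | IsAT G k}

/-- If `H` is a subgraph of `G` (via a strictly monotone vertex embedding mapping edges of `H`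
to edges of `G`), then `AT(H) ≤ AT(G)`. -/
theorem AT_mono (m n : ℕ) (H : SimpleGraph (Fin m)) (G : SimpleGraph (Fin n))
    [DecidableRel H.Adj] [DecidableRel G.Adj]
    (f : Fin m → Fin n) (hf : StrictMono f)
    (hsub : ∀ i j, H.Adj i j → G.Adj (f i) (f j)) :
    ATnum H ≤ ATnum G := by
  -- Edge sets
  set eH := Finset.univ.filter (fun p : Fin m × Fin m => p.1 < p.2 ∧ H.Adj p.1 p.2) with heH
  set eG := Finset.univ.filter (fun p : Fin n × Fin n => p.1 < p.2 ∧ G.Adj p.1 p.2) with heG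
  have hinj : Function.Injective f := hf.injective
  have hmapinj : Function.Injective (fun p : Fin m × Fin m => (f p.1, f p.2)) := by
    intro a b hab
    simp only [Prod.mk.injEq] at hab
    exact Prod.ext (hinj hab.1) (hinj hab.2)
  have himg : eH.image (fun p => (f p.1, f p.2)) ⊆ eG := by
    intro q hq
    simp only [Finset.mem_image] at hq
    obtain ⟨p, hp, rfl⟩ := hq
    simp only [heH, Finset.mem_filter] at hp
    simp only [heG, Finset.mem_filter]
    exact ⟨Finset.mem_univ _, hf hp.2.1, hsub _ _ hp.2.2⟩
  -- Factorization
  have hfact : graphPoly G = rename f (graphPoly H) *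
      ∏ p ∈ eG \ eH.image (fun p => (f p.1, f p.2)), (X p.1 - X p.2 : MvPolynomial (Fin n) ℝ) := by
    have h1 : rename f (graphPoly H) =
        ∏ p ∈ eH.image (fun p => (f p.1, f p.2)), (X p.1 - X p.2 : MvPolynomial (Fin n) ℝ) := by
      rw [Finset.prod_image (fun a _ b _ h => hmapinj h)]
      rw [graphPoly, map_prod]
      exact Finset.prod_congr rfl (fun p _ => by simp)
    rw [h1, mul_comm, Finset.prod_sdiff himg]
    rfl
  -- key step : IsAT G k → IsAT H k
  have key : ∀ k, IsAT G k → IsAT H k := by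
    intro k ⟨t, ht, htk⟩
    rw [hfact, MvPolynomial.coeff_mul] at ht
    obtain ⟨⟨s, u⟩, hsu, hne⟩ := Finset.exists_ne_zero_of_sum_ne_zero ht
    rw [Finset.HasAntidiagonal.mem_antidiagonal] at hsu
    have hs : (rename f (graphPoly H)).coeff s ≠ 0 := left_ne_zero_of_mul hne
    obtain ⟨d, hd, hdne⟩ := MvPolynomial.coeff_rename_ne_zero _ _ _ hs
    refine ⟨d, hdne, fun i => ?_⟩
    have h1 : d i = s (f i) := by
      rw [← hd, Finsupp.mapDomain_apply hinj]
    have h2 : s (f i) ≤ t (f i) := by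
      have := congrArg (fun w => w (f i)) hsu
      simp only [Finsupp.add_apply] at this
      omega
    have := htk (f i)
    omega
  -- graphPoly G ≠ 0
  have hG0 : graphPoly G ≠ 0 := by
    rw [graphPoly, Finset.prod_ne_zero_iff]
    intro p hp
    simp only [heG, Finset.mem_filter] at hp
    exact sub_ne_zero.mpr (fun h => absurd (MvPolynomial.X_injective h) hp.2.1.ne)
  -- {k | IsAT G k} is nonempty
  have hne : {k | IsAT G k}.Nonempty := by
    obtain ⟨t, ht⟩ := (MvPolynomial.support_nonempty.mpr hG0)
    refine ⟨(∑ i, t i) + 1, t, MvPolynomial.mem_support_iff.mp ht, fun i => ?_⟩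
    have : t i ≤ ∑ j, t j := Finset.single_le_sum (fun j _ => Nat.zero_le _) (Finset.mem_univ i)
    omega
  have hmem : sInf {k | IsAT G k} ∈ {k | IsAT G k} := Nat.sInf_mem hne
  exact Nat.sInf_le (key _ hmem)
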